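/- Let K be an algebraically closed field of characteristic p > 3, let m be an odd positive integer not divisible by p, and let a, t ∈ K with a³ = −1 and t ≠ 0. Then the polynomial a² + t²X^mY^m − a·t·X^m is irreducible in K[X,Y], and in the fraction field of the integral domain K[X,Y]/(a² + t²X^mY^m − a·t·X^m) the residue class of (a − tX^m)(a − tY^m) is not a square. -/

import Mathlib

set_option maxHeartbeats 1000000
set_option synthInstance.maxHeartbeats 1000000

section AuxLemmas

open Polynomial


noncomputable def auxE (K : Type*) [CommSemiring K] :
    MvPolynomial (Fin 2) K ≃ₐ[K] Polynomial (Polynomial K) :=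
  (MvPolynomial.finSuccEquiv K 1).trans
    (Polynomial.mapAlgEquiv
      ((MvPolynomial.finSuccEquiv K 0).trans
        (Polynomial.mapAlgEquiv (MvPolynomial.isEmptyAlgEquiv K (Fin 0)))))

theorem auxE_X0 {K : Type*} [CommSemiring K] :
    auxE K (MvPolynomial.X 0) = Polynomial.X := by
  simp [auxE, Polynomial.coe_mapAlgEquiv, MvPolynomial.finSuccEquiv_X_zero]

theorem auxE_X1 {K : Type*} [CommSemiring K] :
    auxE K (MvPolynomial.X 1) = Polynomial.C Polynomial.X := by
  have h1 : (MvPolynomial.X 1 : MvPolynomial (Fin 2) K) = MvPolynomial.X (Fin.succ 0) := rfl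
  rw [h1, auxE, AlgEquiv.trans_apply, MvPolynomial.finSuccEquiv_X_succ]
  simp [Polynomial.coe_mapAlgEquiv, MvPolynomial.finSuccEquiv_X_zero]

theorem auxE_C {K : Type*} [CommSemiring K] (k : K) :
    auxE K (MvPolynomial.C k) = Polynomial.C (Polynomial.C k) := by
  rw [← MvPolynomial.algebraMap_eq, AlgEquiv.commutes]
  simp [Polynomial.algebraMap_apply]

-- root multiplicity of powers
theorem aux_rootMultiplicity_pow {K : Type*} [Field K] {q : K[X]} (hq : q ≠ 0) (n : ℕ) (x : K) :
    rootMultiplicity x (q ^ n) = n * rootMultiplicity x q := by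
  induction n with
  | zero => simp [Polynomial.rootMultiplicity_eq_zero, Polynomial.IsRoot]
  | succ n ih =>
      rw [pow_succ, Polynomial.rootMultiplicity_mul (mul_ne_zero (pow_ne_zero _ hq) hq), ih]
      ring

-- odd-degree descent of squares
theorem aux_odd_descent {F M : Type*} [Field F] [Field M] [Algebra F M]
    [FiniteDimensional F M] (hodd : Odd (Module.finrank F M)) (s : F)
    (h : IsSquare (algebraMap F M s)) : IsSquare s := by
  obtain ⟨u, hu⟩ := h
  have hint : IsIntegral F u := by
    refine ⟨X ^ 2 - C s, monic_X_pow_sub_C _ (by norm_num), ?_⟩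
    simp [eval₂_sub, eval₂_pow, hu, sq]
  have haev : (Polynomial.aeval u) (X ^ 2 - C s) = 0 := by
    have : (Polynomial.aeval u) (C s) = algebraMap F M s := by simp
    simp [map_sub, map_pow, this, hu, sq]
  have hdvd : minpoly F u ∣ X ^ 2 - C s := minpoly.dvd F u haev
  have hne : (X ^ 2 - C s : F[X]) ≠ 0 := (monic_X_pow_sub_C _ (two_ne_zero)).ne_zero
  have hle : (minpoly F u).natDegree ≤ 2 := by
    simpa [natDegree_X_pow_sub_C] using Polynomial.natDegree_le_of_dvd hdvd hne
  have hdvdrank : (minpoly F u).natDegree ∣ Module.finrank F M := minpoly.degree_dvd hint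
  have hpos : 0 < (minpoly F u).natDegree := minpoly.natDegree_pos hint
  have hone : (minpoly F u).natDegree = 1 := by
    have hoddd : Odd (minpoly F u).natDegree := hodd.of_dvd_nat hdvdrank
    interval_cases h : (minpoly F u).natDegree
    · rfl
    · exact absurd hoddd (by decide)
  obtain ⟨v, hv⟩ := minpoly.natDegree_eq_one_iff.mp hone
  refine ⟨v, ?_⟩
  have : algebraMap F M s = algebraMap F M (v * v) := by
    rw [map_mul, hv, hu]
  exact (algebraMap F M).injective this

-- divisibility descent from fraction field, arbitrary right factor
theorem aux_dvd_of_map_dvd {R : Type*} [CommRing R] [IsDomain R] [NormalizedGCDMonoid R]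
    (F : Type*) [Field F] [Algebra R F] [IsFractionRing R F]
    {p q : R[X]} (hp : p.IsPrimitive)
    (h : p.map (algebraMap R F) ∣ q.map (algebraMap R F)) : p ∣ q := by
  rcases eq_or_ne q 0 with rfl | hq
  · exact dvd_zero p
  have hcontent : q.content ≠ 0 := by
    simpa [Polynomial.content_eq_zero_iff] using hq
  have hunit : IsUnit ((Polynomial.C q.content).map (algebraMap R F)) := by
    rw [Polynomial.map_C]
    exact Polynomial.isUnit_C.mpr
      ((map_ne_zero_iff _ (IsFractionRing.injective R F)).mpr hcontent).isUnit
  have h2 : p.map (algebraMap R F) ∣ q.primPart.map (algebraMap R F) := by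
    have hq' : q.map (algebraMap R F) =
        (Polynomial.C q.content).map (algebraMap R F) * q.primPart.map (algebraMap R F) := by
      rw [← Polynomial.map_mul, ← Polynomial.eq_C_content_mul_primPart q]
    rw [hq'] at h
    exact (hunit.dvd_mul_left).mp h
  exact (hp.dvd_of_fraction_map_dvd_fraction_map h2).trans
    (q.primPart_dvd)

-- q-th roots of polynomials inside the rational function field are polynomials
theorem aux_root_poly {K : Type*} [Field K] {c : Polynomial K} {q : ℕ} (hq : q ≠ 0)
    {b : RatFunc K} (hb : b ^ q = algebraMap (Polynomial K) (RatFunc K) c) :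
    ∃ d : Polynomial K, d ^ q = c := by
  have hint : IsIntegral (Polynomial K) b := by
    refine ⟨X ^ q - C c, monic_X_pow_sub_C _ hq, ?_⟩
    simp [hb]
  obtain ⟨d, hd⟩ := IsIntegrallyClosed.isIntegral_iff.mp hint
  refine ⟨d, IsFractionRing.injective (Polynomial K) (RatFunc K) ?_⟩
  rw [map_pow, hd, hb]

-- an odd power of X times a nonzero constant is not a square in K(X)
theorem aux_not_square {K : Type*} [Field K] {k : K} (hk : k ≠ 0) {m : ℕ} (hodd : Odd m) :
    ¬ IsSquare (algebraMap (Polynomial K) (RatFunc K) (Polynomial.C k * Polynomial.X ^ m)) := by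
  rintro ⟨u, hu⟩
  have hu2 : u ^ 2 = algebraMap (Polynomial K) (RatFunc K) (Polynomial.C k * Polynomial.X ^ m) := by
    rw [sq, ← hu]
  obtain ⟨d, hd⟩ := aux_root_poly two_ne_zero hu2
  have hne : Polynomial.C k * Polynomial.X ^ m ≠ 0 := by
    exact mul_ne_zero (by simpa using hk) (pow_ne_zero _ X_ne_zero)
  have hdne : d ≠ 0 := by
    rintro rfl
    rw [zero_pow two_ne_zero] at hd
    exact hne hd.symm
  have := congrArg (rootMultiplicity (0 : K)) hd
  rw [aux_rootMultiplicity_pow hdne, rootMultiplicity_mul hne,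
    rootMultiplicity_C] at this
  have hXm : rootMultiplicity (0 : K) ((X : Polynomial K) ^ m) = m := by
    have : ((X : Polynomial K) ^ m) = (X - C (0:K)) ^ m := by simp
    rw [this, rootMultiplicity_X_sub_C_pow]
  rw [hXm] at this
  obtain ⟨j, hj⟩ := hodd
  omega

theorem aux_no_qth {K : Type*} [Field K] [IsAlgClosed K] {a t : K} (hA : a ≠ 0) (ht : t ≠ 0)
    {m : ℕ} (hm : 0 < m) (hmK : (m : K) ≠ 0) :
    ∀ q : ℕ, q.Prime → q ∣ m → ∀ b : RatFunc K,
      b ^ q ≠ -(algebraMap (Polynomial K) (RatFunc K) (Polynomial.C (a ^ 2))) /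
        algebraMap (Polynomial K) (RatFunc K)
          (Polynomial.C (t ^ 2) * Polynomial.X ^ m - Polynomial.C (a * t)) := by
  intro q hq hqm b hb
  set c₁ : Polynomial K := Polynomial.C (t ^ 2) * Polynomial.X ^ m - Polynomial.C (a * t) with hc₁
  have hdeg : c₁.degree = (m : WithBot ℕ) := by
    rw [hc₁, degree_sub_eq_left_of_degree_lt]
    · exact degree_C_mul_X_pow m (pow_ne_zero 2 ht)
    · rw [degree_C_mul_X_pow m (pow_ne_zero 2 ht)]
      exact lt_of_le_of_lt (degree_C_le) (by exact_mod_cast hm)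
  have hc₁ne : c₁ ≠ 0 := by
    intro h; rw [h, degree_zero] at hdeg; exact (by simp : (⊥ : WithBot ℕ) ≠ (m : WithBot ℕ)) hdeg
  obtain ⟨z, hz⟩ := IsAlgClosed.exists_root c₁ (by rw [hdeg]; exact_mod_cast hm.ne')
  have hzne : z ≠ 0 := by
    rintro rfl
    rw [Polynomial.IsRoot, hc₁] at hz
    simp [zero_pow hm.ne'] at hz
    rcases hz with h | h
    exacts [hA h, ht h]
  have hderiv : Polynomial.derivative c₁ =
      Polynomial.C (t ^ 2) * (Polynomial.C (m : K) * Polynomial.X ^ (m - 1)) := by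
    rw [hc₁, derivative_sub, derivative_C, sub_zero, derivative_C_mul, derivative_X_pow]
  have hmult : rootMultiplicity z c₁ = 1 := by
    have h1 : 0 < rootMultiplicity z c₁ := (rootMultiplicity_pos hc₁ne).mpr hz
    have h2 : ¬ 1 < rootMultiplicity z c₁ := by
      rw [one_lt_rootMultiplicity_iff_isRoot hc₁ne]
      rintro ⟨-, hder⟩
      rw [Polynomial.IsRoot, hderiv] at hder
      simp only [eval_mul, eval_C, eval_pow, eval_X] at hder
      exact mul_ne_zero (pow_ne_zero _ ht) (mul_ne_zero hmK (pow_ne_zero _ hzne)) hder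
    omega
  have hBne : algebraMap (Polynomial K) (RatFunc K) c₁ ≠ 0 :=
    (map_ne_zero_iff _ (IsFractionRing.injective _ _)).mpr hc₁ne
  have hq1 : q - 1 + 1 = q := Nat.succ_pred_eq_of_pos hq.pos
  have hmapeq : algebraMap (Polynomial K) (RatFunc K) (Polynomial.C (-(a ^ 2)) * c₁ ^ (q - 1)) =
      -(algebraMap (Polynomial K) (RatFunc K) (Polynomial.C (a ^ 2))) *
        (algebraMap (Polynomial K) (RatFunc K) c₁) ^ (q - 1) := by
    rw [Polynomial.C_neg, map_mul, map_neg]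
    rw [map_pow (algebraMap (Polynomial K) (RatFunc K)) c₁ (q-1)]
  have key : (b * algebraMap (Polynomial K) (RatFunc K) c₁) ^ q =
      algebraMap (Polynomial K) (RatFunc K) (Polynomial.C (-(a ^ 2)) * c₁ ^ (q - 1)) := by
    rw [mul_pow, hb, hmapeq, ← hq1, pow_succ]
    field_simp
    rw [Nat.add_sub_cancel]
    ring
  obtain ⟨d, hd⟩ := aux_root_poly hq.ne_zero key
  have hrhsne : Polynomial.C (-(a ^ 2)) * c₁ ^ (q - 1) ≠ 0 :=
    mul_ne_zero (by simp [hA]) (pow_ne_zero _ hc₁ne)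
  have hdne : d ≠ 0 := by
    rintro rfl
    rw [zero_pow hq.ne_zero] at hd
    exact hrhsne hd.symm
  have heq := congrArg (rootMultiplicity z) hd
  rw [aux_rootMultiplicity_pow hdne, rootMultiplicity_mul hrhsne, rootMultiplicity_C,
    aux_rootMultiplicity_pow hc₁ne, hmult] at heq
  have h2 := hq.two_le
  rcases Nat.eq_zero_or_pos (rootMultiplicity z d) with h | h
  · rw [h, mul_zero] at heq; omega
  · have h3 : q ≤ q * rootMultiplicity z d := Nat.le_mul_of_pos_right q h
    omega

end AuxLemmas


open MvPolynomial

/-- The residue class of `g` in the total fraction ring of `K[X,Y]/(f)`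
(the function field of the curve `f = 0` when `f` is irreducible). -/
noncomputable def residueInFunctionField {K : Type*} [Field K]
    (f g : MvPolynomial (Fin 2) K) :
    FractionRing (MvPolynomial (Fin 2) K ⧸ Ideal.span {f}) :=
  algebraMap (MvPolynomial (Fin 2) K ⧸ Ideal.span {f})
    (FractionRing (MvPolynomial (Fin 2) K ⧸ Ideal.span {f}))
    (Ideal.Quotient.mk (Ideal.span {f}) g)

theorem statement_18 (K : Type) [Field K] [IsAlgClosed K]
    (p : ℕ) [CharP K p] (hp : p.Prime) (hp3 : 3 < p)
    (m : ℕ) (hm : 0 < m) (hodd : Odd m) (hpm : ¬ (p ∣ m))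
    (a t : K) (ha : a ^ 3 = -1) (ht : t ≠ 0) :
    Irreducible (C a ^ 2 + C t ^ 2 * X 0 ^ m * X 1 ^ m - C a * C t * X 0 ^ m :
        MvPolynomial (Fin 2) K) ∧
    ¬ IsSquare (residueInFunctionField
      (C a ^ 2 + C t ^ 2 * X 0 ^ m * X 1 ^ m - C a * C t * X 0 ^ m)
      ((C a - C t * X 0 ^ m) * (C a - C t * X 1 ^ m))) := by
  letI := Classical.decEq K
  have hA : a ≠ 0 := by
    rintro rfl
    rw [zero_pow (by norm_num : (3:ℕ) ≠ 0)] at ha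
    exact one_ne_zero (neg_eq_zero.mp ha.symm)
  have hmK : (m : K) ≠ 0 := by
    rw [Ne, CharP.cast_eq_zero_iff K p]
    exact hpm
  set fpoly : MvPolynomial (Fin 2) K :=
    C a ^ 2 + C t ^ 2 * X 0 ^ m * X 1 ^ m - C a * C t * X 0 ^ m with hfpoly
  set gpoly : MvPolynomial (Fin 2) K :=
    (C a - C t * X 0 ^ m) * (C a - C t * X 1 ^ m) with hgpoly
  set c₁ : Polynomial K := Polynomial.C (t ^ 2) * Polynomial.X ^ m - Polynomial.C (a * t)
    with hc₁
  set fP : Polynomial (Polynomial K) :=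
    Polynomial.C (Polynomial.C (a ^ 2)) + Polynomial.C c₁ * Polynomial.X ^ m with hfP
  have hEf : auxE K fpoly = fP := by
    rw [hfpoly, hfP, hc₁]
    simp only [map_add, map_sub, map_mul, map_pow, auxE_X0, auxE_X1, auxE_C,
      Polynomial.C_sub, Polynomial.C_mul, Polynomial.C_pow]
    ring
  have hdeg : c₁.degree = (m : WithBot ℕ) := by
    rw [hc₁, Polynomial.degree_sub_eq_left_of_degree_lt]
    · exact Polynomial.degree_C_mul_X_pow m (pow_ne_zero 2 ht)
    · rw [Polynomial.degree_C_mul_X_pow m (pow_ne_zero 2 ht)]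
      exact lt_of_le_of_lt (Polynomial.degree_C_le) (by exact_mod_cast hm)
  have hc₁ne : c₁ ≠ 0 := by
    intro h; rw [h, Polynomial.degree_zero] at hdeg
    exact (by simp : (⊥ : WithBot ℕ) ≠ (m : WithBot ℕ)) hdeg
  set u1 : RatFunc K := algebraMap (Polynomial K) (RatFunc K) c₁ with hu1
  have hu1ne : u1 ≠ 0 := (map_ne_zero_iff _ (IsFractionRing.injective _ _)).mpr hc₁ne
  set r : RatFunc K := -(algebraMap (Polynomial K) (RatFunc K) (Polynomial.C (a ^ 2))) / u1
    with hr
  set tgt : Polynomial (RatFunc K) := Polynomial.X ^ m - Polynomial.C r with htgt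
  have irrtgt : Irreducible tgt := by
    refine X_pow_sub_C_irreducible_of_odd hodd ?_
    intro q hq hqm b
    rw [hr, hu1, hc₁]
    exact aux_no_qth hA ht hm hmK q hq hqm b
  have hfF : fP.map (algebraMap (Polynomial K) (RatFunc K)) = Polynomial.C u1 * tgt := by
    have hu1r : u1 * r = -(algebraMap (Polynomial K) (RatFunc K) (Polynomial.C (a ^ 2))) := by
      rw [hr]; field_simp
    rw [hfP, htgt, Polynomial.map_add, Polynomial.map_mul, Polynomial.map_pow,
      Polynomial.map_C, Polynomial.map_C, Polynomial.map_X, mul_sub, ← Polynomial.C_mul,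
      hu1r, ← hu1, Polynomial.C_neg]
    ring
  have irrfF : Irreducible (fP.map (algebraMap (Polynomial K) (RatFunc K))) := by
    rw [hfF]
    have hassoc : Associated tgt (Polynomial.C u1 * tgt) :=
      ⟨(Polynomial.isUnit_C.mpr hu1ne.isUnit).unit, by
        rw [IsUnit.unit_spec, mul_comm]⟩
    exact hassoc.irreducible irrtgt
  have primfP : fP.IsPrimitive := by
    intro w hw
    have h0 := (Polynomial.C_dvd_iff_dvd_coeff _ _).mp hw 0
    have hcoeff : fP.coeff 0 = Polynomial.C (a ^ 2) := by
      rw [hfP, Polynomial.coeff_add, Polynomial.coeff_C_mul, Polynomial.coeff_X_pow,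
        if_neg (by omega), mul_zero, add_zero, Polynomial.coeff_C_zero]
    rw [hcoeff] at h0
    exact isUnit_of_dvd_unit h0 (Polynomial.isUnit_C.mpr (pow_ne_zero 2 hA).isUnit)
  have irrfP : Irreducible fP :=
    (primfP.irreducible_iff_irreducible_map_fraction_map (K := RatFunc K)).mpr irrfF
  have irrf : Irreducible fpoly := by
    have h1 : Irreducible (auxE K fpoly) := hEf ▸ irrfP
    exact (MulEquiv.irreducible_iff (auxE K)).mp h1
  refine ⟨irrf, ?_⟩
  intro hsq
  have hprime : Prime fpoly := UniqueFactorizationMonoid.irreducible_iff_prime.mp irrf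
  haveI hspanprime : (Ideal.span {fpoly}).IsPrime :=
    (Ideal.span_singleton_prime hprime.ne_zero).mpr hprime
  haveI : Fact (Irreducible tgt) := ⟨irrtgt⟩
  set M := AdjoinRoot tgt with hM
  set φ : MvPolynomial (Fin 2) K →+* M :=
    (AdjoinRoot.mk tgt).comp
      ((Polynomial.mapRingHom (algebraMap (Polynomial K) (RatFunc K))).comp
        (auxE K).toAlgHom.toRingHom) with hφ
  have hφ_apply : ∀ P, φ P =
      AdjoinRoot.mk tgt ((auxE K P).map (algebraMap (Polynomial K) (RatFunc K))) :=
    fun P => rfl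
  have hassoc : Associated tgt (Polynomial.C u1 * tgt) :=
    ⟨(Polynomial.isUnit_C.mpr hu1ne.isUnit).unit, by rw [IsUnit.unit_spec, mul_comm]⟩
  have hφf : φ fpoly = 0 := by
    rw [hφ_apply, hEf, hfF, AdjoinRoot.mk_eq_zero]
    exact dvd_mul_left tgt (Polynomial.C u1)
  have hker : ∀ P, φ P = 0 → fpoly ∣ P := by
    intro P hP
    rw [hφ_apply, AdjoinRoot.mk_eq_zero] at hP
    have h2 : fP.map (algebraMap (Polynomial K) (RatFunc K)) ∣
        (auxE K P).map (algebraMap (Polynomial K) (RatFunc K)) := by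
      rw [hfF]
      exact (hassoc.dvd_iff_dvd_left).mp hP
    have h3 : fP ∣ auxE K P := aux_dvd_of_map_dvd (RatFunc K) primfP h2
    have h4 : auxE K fpoly ∣ auxE K P := hEf ▸ h3
    obtain ⟨c, hc⟩ := h4
    refine ⟨(auxE K).symm c, ?_⟩
    apply (auxE K).injective
    rw [map_mul, hc, AlgEquiv.apply_symm_apply]
  have hvanish : ∀ x ∈ Ideal.span {fpoly}, φ x = 0 := by
    intro x hx
    obtain ⟨c, rfl⟩ := Ideal.mem_span_singleton.mp hx
    rw [map_mul, hφf, zero_mul]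
  set φbar := Ideal.Quotient.lift (Ideal.span {fpoly}) φ hvanish with hφbar
  have hinj : Function.Injective φbar := by
    rw [injective_iff_map_eq_zero]
    intro x hx
    obtain ⟨P, rfl⟩ := Ideal.Quotient.mk_surjective x
    rw [hφbar, Ideal.Quotient.lift_mk] at hx
    rw [Ideal.Quotient.eq_zero_iff_mem, Ideal.mem_span_singleton]
    exact hker P hx
  set Φ : FractionRing (MvPolynomial (Fin 2) K ⧸ Ideal.span {fpoly}) →+* M :=
    IsFractionRing.lift hinj with hΦ
  have hgf : gpoly = fpoly - C a * C t * X 1 ^ m := by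
    rw [hgpoly, hfpoly]; ring
  set w : Polynomial K := Polynomial.C (a * t) * Polynomial.X ^ m with hw
  have hEg : auxE K (C a * C t * X 1 ^ m : MvPolynomial (Fin 2) K) = Polynomial.C w := by
    have h1 : (C a * C t * X 1 ^ m : MvPolynomial (Fin 2) K) = C (a * t) * X 1 ^ m := by
      rw [MvPolynomial.C_mul]
    rw [h1, map_mul, map_pow, auxE_C, auxE_X1, ← Polynomial.C_pow, ← Polynomial.C_mul, hw]
  have hmkC : ∀ v : RatFunc K, AdjoinRoot.mk tgt (Polynomial.C v) = algebraMap (RatFunc K) M v := by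
    intro v
    rw [AdjoinRoot.algebraMap_eq]
    exact AdjoinRoot.mk_C v
  have hφg : φ gpoly = -(algebraMap (RatFunc K) M (algebraMap (Polynomial K) (RatFunc K) w)) := by
    rw [hgf, map_sub, hφf, zero_sub]
    rw [hφ_apply, hEg, Polynomial.map_C, hmkC]
  have hval : Φ (residueInFunctionField fpoly gpoly) =
      algebraMap (RatFunc K) M (-(algebraMap (Polynomial K) (RatFunc K) w)) := by
    show Φ (algebraMap _ _ (Ideal.Quotient.mk _ gpoly)) = _
    rw [hΦ, IsFractionRing.lift_algebraMap, hφbar, Ideal.Quotient.lift_mk, hφg, map_neg]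
  haveI : Module.Finite (RatFunc K) M := (AdjoinRoot.powerBasis irrtgt.ne_zero).finite
  have hfr : Module.finrank (RatFunc K) M = m := by
    rw [(AdjoinRoot.powerBasis irrtgt.ne_zero).finrank]
    show tgt.natDegree = m
    rw [htgt, Polynomial.natDegree_X_pow_sub_C]
  have hsqF : IsSquare (-(algebraMap (Polynomial K) (RatFunc K) w)) := by
    apply aux_odd_descent (hfr ▸ hodd)
    rw [← hval]
    exact hsq.map Φ
  have hneg : Polynomial.C (-(a * t)) * Polynomial.X ^ m = -w := by
    rw [hw, Polynomial.C_neg]; ring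
  exact aux_not_square (neg_ne_zero.mpr (mul_ne_zero hA ht)) hodd
    (by rw [hneg, map_neg]; exact hsqF)
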